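/- Let Q = ∏_{i=1}^k q_i with q_i pairwise coprime, and let p be coprime to Q. For an integer a with symmetric residues a_i = [a]_{q_i} ∈ [-q_i/2, q_i/2), the fast base extension FBE(a) = Σ_{i=1}^k [a_i · (Q/q_i)^{-1}]_{q_i} · (Q/q_i) satisfies FBE(a) ≡ a (mod Q), and FBE(a) = a* + Q·r where a* is the symmetric representative of a mod Q and r is an integer with |r| ≤ k/2. -/

import Mathlib

/-- Symmetric representative of `x` modulo `q`, in `[-q/2, q/2)` (for even `q`). -/
def symMod (x q : ℤ) : ℤ := (x + q / 2) % q - q / 2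

lemma symMod_modEq (x q : ℤ) : symMod x q ≡ x [ZMOD q] := by
  have h : x - symMod x q = q * ((x + q / 2) / q) := by
    have := Int.emod_add_mul_ediv (x + q / 2) q
    unfold symMod; linarith
  exact Int.modEq_iff_dvd.mpr ⟨_, h⟩

lemma symMod_bounds (x q : ℤ) (hq : 0 < q) :
    -q ≤ 2 * symMod x q ∧ 2 * symMod x q ≤ q - 1 := by
  unfold symMod
  have h1 := Int.emod_nonneg (x + q / 2) (ne_of_gt hq)
  have h2 := Int.emod_lt_of_pos (x + q / 2) hq
  omega

/-- Fast base extension (Bajard et al.): with `Q = ∏ qᵢ` pairwise coprime, `p` coprime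
to `Q`, and `aᵢ = [a]_{qᵢ}`, the quantity
`FBE(a) = Σᵢ [aᵢ·(Q/qᵢ)⁻¹]_{qᵢ}·(Q/qᵢ)` satisfies `FBE(a) ≡ a (mod Q)` and
`FBE(a) = [a]_Q + Q·r` with `|r| ≤ k/2`. -/
theorem stmt8 (k : ℕ) (hk : 0 < k) (q : Fin k → ℤ) (hpos : ∀ i, 0 < q i)
    (hcop : ∀ i j, i ≠ j → IsCoprime (q i) (q j))
    (Q : ℤ) (hQ : Q = ∏ i, q i)
    (p : ℤ) (hp : IsCoprime p Q)
    (inv : Fin k → ℤ) (hinv : ∀ i, (Q / q i) * inv i ≡ 1 [ZMOD q i])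
    (a : ℤ) :
    (∑ i, symMod (symMod a (q i) * inv i) (q i) * (Q / q i)) ≡ a [ZMOD Q] ∧
    ∃ r : ℤ, (∑ i, symMod (symMod a (q i) * inv i) (q i) * (Q / q i)) =
        symMod a Q + Q * r ∧ 2 * |r| ≤ (k : ℤ) := by
  have hq0 : ∀ i, q i ≠ 0 := fun i => (hpos i).ne'
  have hQpos : 0 < Q := hQ ▸ Finset.prod_pos (fun i _ => hpos i)
  have hdvd : ∀ i, q i ∣ Q := fun i => hQ ▸ Finset.dvd_prod_of_mem q (Finset.mem_univ i)
  have hQeq : ∀ i, q i * (Q / q i) = Q := fun i => Int.mul_ediv_cancel' (hdvd i)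
  have hQq : ∀ i, Q / q i = ∏ l ∈ Finset.univ.erase i, q l := by
    intro i
    have h1 : Q = q i * ∏ l ∈ Finset.univ.erase i, q l := by
      rw [hQ, Finset.mul_prod_erase _ _ (Finset.mem_univ i)]
    rw [h1, Int.mul_ediv_cancel_left _ (hq0 i)]
  have hdvd2 : ∀ i j, j ≠ i → q j ∣ Q / q i := by
    intro i j hij
    rw [hQq i]
    exact Finset.dvd_prod_of_mem q (by simp [Finset.mem_erase, hij])
  set S := ∑ i, symMod (symMod a (q i) * inv i) (q i) * (Q / q i) with hS
  have hcong : ∀ j, q j ∣ S - a := by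
    intro j
    have hterm : S = symMod (symMod a (q j) * inv j) (q j) * (Q / q j)
        + ∑ i ∈ Finset.univ.erase j, symMod (symMod a (q i) * inv i) (q i) * (Q / q i) :=
      (Finset.add_sum_erase _ _ (Finset.mem_univ j)).symm
    have h1 : q j ∣ ∑ i ∈ Finset.univ.erase j,
        symMod (symMod a (q i) * inv i) (q i) * (Q / q i) :=
      Finset.dvd_sum fun i hi =>
        Dvd.dvd.mul_left (hdvd2 i j (Finset.ne_of_mem_erase hi).symm) _
    have h2 : symMod (symMod a (q j) * inv j) (q j) * (Q / q j) ≡ a [ZMOD q j] := by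
      calc symMod (symMod a (q j) * inv j) (q j) * (Q / q j)
          ≡ (symMod a (q j) * inv j) * (Q / q j) [ZMOD q j] :=
            (symMod_modEq _ _).mul_right _
        _ ≡ (a * inv j) * (Q / q j) [ZMOD q j] :=
            ((symMod_modEq a (q j)).mul_right _).mul_right _
        _ = a * ((Q / q j) * inv j) := by ring
        _ ≡ a * 1 [ZMOD q j] := (hinv j).mul_left a
        _ = a := mul_one a
    have h3 : q j ∣ symMod (symMod a (q j) * inv j) (q j) * (Q / q j) - a :=
      Int.ModEq.dvd h2.symm
    have h4 : S - a = (symMod (symMod a (q j) * inv j) (q j) * (Q / q j) - a)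
        + ∑ i ∈ Finset.univ.erase j, symMod (symMod a (q i) * inv i) (q i) * (Q / q i) := by
      rw [hterm]; ring
    rw [h4]
    exact dvd_add h3 h1
  have hQdvd : Q ∣ S - a := by
    rw [hQ]
    exact Finset.prod_dvd_of_coprime
      (fun i _ j _ hij => hcop i j hij) (fun j _ => hcong j)
  have hGoal1 : S ≡ a [ZMOD Q] := (Int.modEq_iff_dvd.mpr hQdvd).symm
  refine ⟨hGoal1, ?_⟩
  have hsm := symMod_modEq a Q
  have hdvd3 : Q ∣ S - symMod a Q := by
    have h5 : Q ∣ a - symMod a Q := Int.ModEq.dvd hsm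
    have h6 : S - symMod a Q = (S - a) + (a - symMod a Q) := by ring
    rw [h6]; exact dvd_add hQdvd h5
  obtain ⟨r, hr⟩ := hdvd3
  refine ⟨r, by linarith, ?_⟩
  -- bounds
  have hb : ∀ i, -Q ≤ 2 * (symMod (symMod a (q i) * inv i) (q i) * (Q / q i)) ∧
      2 * (symMod (symMod a (q i) * inv i) (q i) * (Q / q i)) ≤ Q - 1 := by
    intro i
    obtain ⟨hl, hu⟩ := symMod_bounds (symMod a (q i) * inv i) (q i) (hpos i)
    have hq2 : 0 < Q / q i := by nlinarith [hQeq i, hpos i]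
    constructor
    · nlinarith [hQeq i, mul_le_mul_of_nonneg_right hl hq2.le]
    · nlinarith [hQeq i, mul_le_mul_of_nonneg_right hu hq2.le, hq2]
  have hSl : -(k : ℤ) * Q ≤ 2 * S := by
    rw [hS, Finset.mul_sum]
    calc -(k : ℤ) * Q = ∑ _i : Fin k, -Q := by
          simp [Finset.sum_const, Finset.card_univ]
      _ ≤ _ := Finset.sum_le_sum fun i _ => (hb i).1
  have hSu : 2 * S ≤ (k : ℤ) * (Q - 1) := by
    rw [hS, Finset.mul_sum]
    calc ∑ i, 2 * (symMod (symMod a (q i) * inv i) (q i) * (Q / q i))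
        ≤ ∑ _i : Fin k, (Q - 1) := Finset.sum_le_sum fun i _ => (hb i).2
      _ = (k : ℤ) * (Q - 1) := by simp [Finset.sum_const, Finset.card_univ]; ring
  obtain ⟨hml, hmu⟩ := symMod_bounds a Q hQpos
  have hub : (2 * r) * Q < ((k : ℤ) + 1) * Q := by nlinarith
  have hlb : (-(k : ℤ) - 1) * Q < (2 * r) * Q := by nlinarith
  have hub' : 2 * r < (k : ℤ) + 1 := lt_of_mul_lt_mul_right hub hQpos.le
  have hlb' : -(k : ℤ) - 1 < 2 * r := lt_of_mul_lt_mul_right hlb hQpos.le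
  have habs : 2 * |r| = |2 * r| := by rw [abs_mul]; simp
  rw [habs]
  rw [abs_le]
  omega
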